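/- Let g_{1,k} = X_{[1,k-1]} Z_{[1,k]} Δ_{k+1,k} (k = 1,...,n-1). For integers 1 ≤ i < j ≤ n, the telescoping identity X_{[1,j-1]\{i}} Z_{[1,j-1]} Δ_{j,i} = Σ_{k=i}^{j-1} X_{[k+2,j]} Z_{[k+1,j-1]} g_{1,k} holds, and the initial term of the left side with respect to reverse lexicographic order (x_1 > ... > x_n > y_1 > ... > y_n > z_1 > ... > z_n) is X_{[1,j]\{i}} Y_{{i}} Z_{[1,j-1]}, which is ≥ the initial term of each summand. -/

import Mathlib

open MvPolynomial

/-- 1-based index `i ∈ [1,n]` as an element of `Fin n`. -/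
def fi (n : ℕ) (hn : 0 < n) (i : ℕ) : Fin n := ⟨(i - 1) % n, Nat.mod_lt _ hn⟩

noncomputable def xz (k : Type*) [Field k] (n : ℕ) (hn : 0 < n) (i : ℕ) :
    MvPolynomial (Fin 3 × Fin n) k := X (0, fi n hn i)

noncomputable def yz (k : Type*) [Field k] (n : ℕ) (hn : 0 < n) (i : ℕ) :
    MvPolynomial (Fin 3 × Fin n) k := X (1, fi n hn i)

noncomputable def zz (k : Type*) [Field k] (n : ℕ) (hn : 0 < n) (i : ℕ) :
    MvPolynomial (Fin 3 × Fin n) k := X (2, fi n hn i)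

noncomputable def Δz (k : Type*) [Field k] (n : ℕ) (hn : 0 < n) (a b : ℕ) :
    MvPolynomial (Fin 3 × Fin n) k :=
  xz k n hn a * yz k n hn b - xz k n hn b * yz k n hn a

/-- `g_{1,m} = X_{[1,m-1]} Z_{[1,m]} Δ_{m+1,m}`. -/
noncomputable def gOne (k : Type*) [Field k] (n : ℕ) (hn : 0 < n) (j : ℕ) :
    MvPolynomial (Fin 3 × Fin n) k :=
  (∏ t ∈ Finset.Icc 1 (j - 1), xz k n hn t) * (∏ t ∈ Finset.Icc 1 j, zz k n hn t) *
    Δz k n hn (j + 1) j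

/-- `v` is a more significant variable than `w`: the variables are ordered
`x_1 > … > x_n > y_1 > … > y_n > z_1 > … > z_n` (block 0 = x, 1 = y, 2 = z). -/
def vlt (n : ℕ) (v w : Fin 3 × Fin n) : Prop :=
  v.1 < w.1 ∨ (v.1 = w.1 ∧ v.2 < w.2)

/-- Total degree of an exponent vector. -/
def mdeg (n : ℕ) (a : (Fin 3 × Fin n) →₀ ℕ) : ℕ := a.sum fun _ e => e

/-- The (graded) reverse lexicographic order on exponent vectors: smaller degree,
or equal degree and larger exponent at the least significant variable where they
differ. -/
def rlt (n : ℕ) (a b : (Fin 3 × Fin n) →₀ ℕ) : Prop :=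
  mdeg n a < mdeg n b ∨
    (mdeg n a = mdeg n b ∧ ∃ v, b v < a v ∧ ∀ w, vlt n v w → a w = b w)

/-- `d` is the exponent of the initial term of `f` w.r.t. reverse lex order. -/
def IsInit {k : Type*} [Field k] (n : ℕ) (f : MvPolynomial (Fin 3 × Fin n) k)
    (d : (Fin 3 × Fin n) →₀ ℕ) : Prop :=
  d ∈ f.support ∧ ∀ e ∈ f.support, e ≠ d → rlt n e d

/-- Exponent vector of the squarefree monomial `X_A Y_B Z_C` (1-based index sets). -/
noncomputable def expOf (n : ℕ) (hn : 0 < n) (A B Cs : Finset ℕ) :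
    (Fin 3 × Fin n) →₀ ℕ :=
  (∑ t ∈ A, Finsupp.single ((0 : Fin 3), fi n hn t) 1) +
  (∑ t ∈ B, Finsupp.single ((1 : Fin 3), fi n hn t) 1) +
  (∑ t ∈ Cs, Finsupp.single ((2 : Fin 3), fi n hn t) 1)

section MyHelpers
variable {k : Type*} [Field k] {n : ℕ}

lemma prod_X_eq (A : Finset ℕ) (v : ℕ → Fin 3 × Fin n) :
    (∏ t ∈ A, (X (v t) : MvPolynomial (Fin 3 × Fin n) k)) =
      monomial (∑ t ∈ A, Finsupp.single (v t) 1) 1 := by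
  classical
  induction A using Finset.induction_on with
  | empty => simp
  | insert _ _ h ih =>
      rw [Finset.prod_insert h, ih, Finset.sum_insert h,
        show (X (v _) : MvPolynomial (Fin 3 × Fin n) k) = monomial (Finsupp.single (v _) 1) 1 from rfl,
        monomial_mul, one_mul]

lemma support_binom {a b : (Fin 3 × Fin n) →₀ ℕ} (h : a ≠ b) :
    ((monomial a (1:k)) - monomial b 1).support = {a, b} := by
  classical
  ext e
  simp only [MvPolynomial.mem_support_iff, MvPolynomial.coeff_sub, MvPolynomial.coeff_monomial,
    Finset.mem_insert, Finset.mem_singleton]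
  by_cases hea : a = e <;> by_cases heb : b = e <;> simp_all [eq_comm, sub_eq_zero]

lemma fi_eq (hn : 0 < n) {t : ℕ} (h1 : 1 ≤ t) (h2 : t ≤ n) (p : Fin n) :
    fi n hn t = p ↔ t = (p : ℕ) + 1 := by
  unfold fi
  rw [Fin.ext_iff]
  simp only
  rw [Nat.mod_eq_of_lt (by omega)]
  omega

lemma fi_val (hn : 0 < n) {t : ℕ} (h1 : 1 ≤ t) (h2 : t ≤ n) : (fi n hn t : ℕ) = t - 1 := by
  unfold fi; simp only; rw [Nat.mod_eq_of_lt (by omega)]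

lemma sumsingle_apply (hn : 0 < n) (c : Fin 3) (A : Finset ℕ)
    (hA : ∀ t ∈ A, 1 ≤ t ∧ t ≤ n) (w : Fin 3 × Fin n) :
    (∑ t ∈ A, Finsupp.single ((c, fi n hn t) : Fin 3 × Fin n) (1:ℕ)) w =
      if w.1 = c ∧ ((w.2 : ℕ) + 1) ∈ A then 1 else 0 := by
  classical
  rw [Finset.sum_apply']
  by_cases hc : w.1 = c
  · have key : ∀ t ∈ A, (Finsupp.single ((c, fi n hn t) : Fin 3 × Fin n) (1:ℕ)) w
        = if t = (w.2 : ℕ) + 1 then 1 else 0 := by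
      intro t ht
      rw [Finsupp.single_apply]
      congr 1
      rw [Prod.ext_iff]
      simp only [hc, eq_self_iff_true, true_and]
      rw [eq_iff_iff]
      exact fi_eq hn (hA t ht).1 (hA t ht).2 w.2
    rw [Finset.sum_congr rfl key, Finset.sum_ite_eq' A ((w.2:ℕ)+1) (fun _ => 1)]
    simp [hc]
  · rw [if_neg (by tauto)]
    apply Finset.sum_eq_zero
    intro t ht
    rw [Finsupp.single_apply, if_neg]
    intro h
    exact hc (congrArg Prod.fst h).symm
variable {k : Type*} [Field k] {n : ℕ}

lemma expOf_apply (hn : 0 < n) (A B C : Finset ℕ)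
    (hA : ∀ t ∈ A, 1 ≤ t ∧ t ≤ n) (hB : ∀ t ∈ B, 1 ≤ t ∧ t ≤ n)
    (hC : ∀ t ∈ C, 1 ≤ t ∧ t ≤ n) (w : Fin 3 × Fin n) :
    expOf n hn A B C w =
      (if w.1 = 0 ∧ ((w.2 : ℕ) + 1) ∈ A then 1 else 0) +
      (if w.1 = 1 ∧ ((w.2 : ℕ) + 1) ∈ B then 1 else 0) +
      (if w.1 = 2 ∧ ((w.2 : ℕ) + 1) ∈ C then 1 else 0) := by
  unfold expOf
  rw [Finsupp.add_apply, Finsupp.add_apply,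
    sumsingle_apply hn 0 A hA w, sumsingle_apply hn 1 B hB w, sumsingle_apply hn 2 C hC w]

lemma mdeg_add (a b : (Fin 3 × Fin n) →₀ ℕ) : mdeg n (a + b) = mdeg n a + mdeg n b :=
  Finsupp.sum_add_index' (fun _ => rfl) (fun _ _ _ => rfl)

lemma mdeg_sum_singles (A : Finset ℕ) (v : ℕ → Fin 3 × Fin n) :
    mdeg n (∑ t ∈ A, Finsupp.single (v t) 1) = A.card := by
  classical
  induction A using Finset.induction_on with
  | empty => simp [mdeg]
  | @insert a s h ih =>
      rw [Finset.sum_insert h, mdeg_add, ih, Finset.card_insert_of_notMem h]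
      have : mdeg n (Finsupp.single (v a) 1) = 1 := by
        unfold mdeg
        rw [Finsupp.sum_single_index rfl]
      omega

lemma mdeg_expOf (hn : 0 < n) (A B C : Finset ℕ) :
    mdeg n (expOf n hn A B C) = A.card + B.card + C.card := by
  unfold expOf
  rw [mdeg_add, mdeg_add, mdeg_sum_singles, mdeg_sum_singles, mdeg_sum_singles]

lemma vlt_trichotomy (v w : Fin 3 × Fin n) : vlt n v w ∨ v = w ∨ vlt n w v := by
  unfold vlt
  rcases lt_trichotomy v.1 w.1 with h | h | h
  · exact Or.inl (Or.inl h)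
  · rcases lt_trichotomy v.2 w.2 with h2 | h2 | h2
    · exact Or.inl (Or.inr ⟨h, h2⟩)
    · exact Or.inr (Or.inl (Prod.ext h h2))
    · exact Or.inr (Or.inr (Or.inr ⟨h.symm, h2⟩))
  · exact Or.inr (Or.inr (Or.inl h))

lemma rlt_asymm {a b : (Fin 3 × Fin n) →₀ ℕ} (h1 : rlt n a b) (h2 : rlt n b a) : False := by
  rcases h1 with h1 | ⟨hd1, v, hv1, hv2⟩
  · rcases h2 with h2 | ⟨hd2, _⟩ <;> omega
  · rcases h2 with h2 | ⟨hd2, u, hu1, hu2⟩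
    · omega
    · rcases vlt_trichotomy v u with h | h | h
      · have := hv2 u h; omega
      · subst h; omega
      · have := hu2 v h; omega

lemma rlt_ne {a b : (Fin 3 × Fin n) →₀ ℕ} (h : rlt n a b) : a ≠ b := by
  rintro rfl
  rcases h with h | ⟨-, v, hv, -⟩ <;> omega

lemma isInit_binom {a b : (Fin 3 × Fin n) →₀ ℕ} (hab : a ≠ b) (h : rlt n b a) :
    IsInit n ((monomial a (1:k)) - monomial b 1) a := by
  constructor
  · rw [support_binom hab]; simp
  · intro e he hne
    rw [support_binom hab] at he
    rcases Finset.mem_insert.mp he with rfl | he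
    · exact absurd rfl hne
    · rw [Finset.mem_singleton.mp he]
      exact h

lemma isInit_unique {f : MvPolynomial (Fin 3 × Fin n) k} {d e : (Fin 3 × Fin n) →₀ ℕ}
    (hd : IsInit n f d) (he : IsInit n f e) : d = e := by
  by_contra h
  exact rlt_asymm (hd.2 e he.1 (fun h' => h h'.symm)) (he.2 d hd.1 h)

lemma telescope {M : Type*} [AddCommGroup M] (F : ℕ → M) (a b : ℕ) (h : a ≤ b) :
    ∑ m ∈ Finset.Icc a b, (F m - F (m+1)) = F a - F (b+1) := by
  induction b with
  | zero =>
      interval_cases a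
      simp
  | succ b ih =>
      rcases Nat.lt_or_ge a (b+1) with h' | h'
      · rw [Finset.sum_Icc_succ_top (by omega), ih (by omega)]
        abel
      · have : a = b + 1 := by omega
        subst this
        simp


end MyHelpers

section
variable {M : Type*} [AddCommMonoid M]

lemma split_eraseA (g : ℕ → M) {m j : ℕ} (h1 : 1 ≤ m) (h2 : m < j) :
    ∑ t ∈ (Finset.Icc 1 j).erase m, g t
      = (∑ t ∈ Finset.Icc (m+2) j, g t) + (∑ t ∈ Finset.Icc 1 (m-1), g t) + g (m+1) := by
  have hset : (Finset.Icc 1 j).erase m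
      = (Finset.Icc 1 (m-1)) ∪ insert (m+1) (Finset.Icc (m+2) j) := by
    ext a
    simp only [Finset.mem_erase, Finset.mem_Icc, Finset.mem_union, Finset.mem_insert]
    omega
  rw [hset, Finset.sum_union (by
      simp only [Finset.disjoint_left, Finset.mem_Icc, Finset.mem_insert]
      intro a ha
      omega),
    Finset.sum_insert (by simp only [Finset.mem_Icc]; omega)]
  abel

lemma split_eraseB (g : ℕ → M) {m j : ℕ} (h1 : 1 ≤ m) (h2 : m + 1 ≤ j) :
    ∑ t ∈ (Finset.Icc 1 j).erase (m+1), g t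
      = (∑ t ∈ Finset.Icc (m+2) j, g t) + (∑ t ∈ Finset.Icc 1 (m-1), g t) + g m := by
  have hset : (Finset.Icc 1 j).erase (m+1)
      = (Finset.Icc 1 (m-1)) ∪ insert m (Finset.Icc (m+2) j) := by
    ext a
    simp only [Finset.mem_erase, Finset.mem_Icc, Finset.mem_union, Finset.mem_insert]
    omega
  rw [hset, Finset.sum_union (by
      simp only [Finset.disjoint_left, Finset.mem_Icc, Finset.mem_insert]
      intro a ha
      omega),
    Finset.sum_insert (by simp only [Finset.mem_Icc]; omega)]
  abel

lemma split_z (g : ℕ → M) {m j : ℕ} (h2 : m ≤ j - 1) :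
    ∑ t ∈ Finset.Icc 1 (j-1), g t
      = (∑ t ∈ Finset.Icc (m+1) (j-1), g t) + ∑ t ∈ Finset.Icc 1 m, g t := by
  have hset : Finset.Icc 1 (j-1) = (Finset.Icc 1 m) ∪ (Finset.Icc (m+1) (j-1)) := by
    ext a
    simp only [Finset.mem_Icc, Finset.mem_union]
    omega
  rw [hset, Finset.sum_union (by
      simp only [Finset.disjoint_left, Finset.mem_Icc]
      intro a ha
      omega)]
  abel

lemma split_top (g : ℕ → M) {i j : ℕ} (h1 : 1 ≤ i) (h2 : i < j) :
    ∑ t ∈ (Finset.Icc 1 j).erase i, g t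
      = (∑ t ∈ (Finset.Icc 1 (j-1)).erase i, g t) + g j := by
  have hset : (Finset.Icc 1 j).erase i = insert j ((Finset.Icc 1 (j-1)).erase i) := by
    ext a
    simp only [Finset.mem_erase, Finset.mem_Icc, Finset.mem_insert]
    omega
  rw [hset, Finset.sum_insert (by simp only [Finset.mem_erase, Finset.mem_Icc]; omega)]
  abel

lemma erase_topset {j : ℕ} (h : 1 ≤ j) : (Finset.Icc 1 j).erase j = Finset.Icc 1 (j-1) := by
  ext a
  simp only [Finset.mem_erase, Finset.mem_Icc]
  omega

lemma split_full (g : ℕ → M) {i j : ℕ} (h1 : 1 ≤ i) (h2 : i ≤ j - 1) :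
    ∑ t ∈ Finset.Icc 1 (j-1), g t
      = (∑ t ∈ (Finset.Icc 1 (j-1)).erase i, g t) + g i := by
  rw [Finset.sum_erase_add _ _ (Finset.mem_Icc.mpr ⟨h1, h2⟩)]
end

/-- For `1 ≤ i < j ≤ n`: the telescoping identity
`X_{[1,j-1]\{i}} Z_{[1,j-1]} Δ_{j,i} = Σ_{m=i}^{j-1} X_{[m+2,j]} Z_{[m+1,j-1]} g_{1,m}`
holds; the initial exponent of the left side in reverse lex order is that of
`X_{[1,j]\{i}} Y_{{i}} Z_{[1,j-1]}`; and it is `≥` the initial exponent of every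
summand. -/
theorem stmt13 (k : Type*) [Field k] (n : ℕ) (hn : 4 ≤ n)
    (i j : ℕ) (hi : 1 ≤ i) (hij : i < j) (hjn : j ≤ n) :
    ((∏ t ∈ (Finset.Icc 1 (j - 1)).erase i, xz k n (by omega) t) *
        (∏ t ∈ Finset.Icc 1 (j - 1), zz k n (by omega) t) * Δz k n (by omega) j i =
      ∑ m ∈ Finset.Icc i (j - 1),
        (∏ t ∈ Finset.Icc (m + 2) j, xz k n (by omega) t) *
          (∏ t ∈ Finset.Icc (m + 1) (j - 1), zz k n (by omega) t) *
          gOne k n (by omega) m) ∧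
    IsInit n
      ((∏ t ∈ (Finset.Icc 1 (j - 1)).erase i, xz k n (by omega) t) *
        (∏ t ∈ Finset.Icc 1 (j - 1), zz k n (by omega) t) * Δz k n (by omega) j i)
      (expOf n (by omega) ((Finset.Icc 1 j).erase i) {i} (Finset.Icc 1 (j - 1))) ∧
    (∀ m ∈ Finset.Icc i (j - 1), ∀ e,
      IsInit n
        ((∏ t ∈ Finset.Icc (m + 2) j, xz k n (by omega) t) *
          (∏ t ∈ Finset.Icc (m + 1) (j - 1), zz k n (by omega) t) *
          gOne k n (by omega) m) e →
      (e = expOf n (by omega) ((Finset.Icc 1 j).erase i) {i} (Finset.Icc 1 (j - 1)) ∨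
        rlt n e (expOf n (by omega) ((Finset.Icc 1 j).erase i) {i}
          (Finset.Icc 1 (j - 1))))) := by
  classical
  have h0 : 0 < n := by omega
  set F : ℕ → ((Fin 3 × Fin n) →₀ ℕ) := fun m =>
    expOf n h0 ((Finset.Icc 1 j).erase m) {m} (Finset.Icc 1 (j-1)) with hF
  have hbA : ∀ p, (∀ t ∈ (Finset.Icc 1 j).erase p, 1 ≤ t ∧ t ≤ n) := by
    intro p t ht
    simp only [Finset.mem_erase, Finset.mem_Icc] at ht
    omega
  have hbB : ∀ p, 1 ≤ p → p ≤ j → ∀ t ∈ ({p} : Finset ℕ), 1 ≤ t ∧ t ≤ n := by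
    intro p h1 h2 t ht
    simp only [Finset.mem_singleton] at ht
    omega
  have hbC : ∀ t ∈ Finset.Icc 1 (j-1), 1 ≤ t ∧ t ≤ n := by
    intro t ht
    simp only [Finset.mem_Icc] at ht
    omega
  have hrlt : ∀ p q, 1 ≤ p → p < q → q ≤ j → rlt n (F q) (F p) := by
    intro p q hp hpq hqj
    right
    constructor
    · simp only [hF]
      rw [mdeg_expOf, mdeg_expOf,
        Finset.card_erase_of_mem (Finset.mem_Icc.mpr ⟨by omega, by omega⟩),
        Finset.card_erase_of_mem (Finset.mem_Icc.mpr ⟨by omega, by omega⟩)]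
      simp
    · refine ⟨((1 : Fin 3), fi n h0 q), ?_, ?_⟩
      · have hq : ((fi n h0 q : ℕ) + 1) = q := by
          rw [fi_val h0 (by omega) (by omega)]; omega
        simp only [hF]
        rw [expOf_apply h0 _ _ _ (hbA p) (hbB p (by omega) (by omega)) hbC,
            expOf_apply h0 _ _ _ (hbA q) (hbB q (by omega) (by omega)) hbC]
        simp [hq, Finset.mem_erase, Finset.mem_Icc, (show ¬ q = p by omega)]
      · intro w hw
        simp only [hF]
        rw [expOf_apply h0 _ _ _ (hbA q) (hbB q (by omega) (by omega)) hbC,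
            expOf_apply h0 _ _ _ (hbA p) (hbB p (by omega) (by omega)) hbC]
        simp only [vlt] at hw
        rcases hw with hw | ⟨hw1, hw2⟩
        · have h3 : (w.1 : ℕ) < 3 := w.1.isLt
          have h4 : (1 : ℕ) < (w.1 : ℕ) := by simpa [Fin.lt_def] using hw
          have h5 : ((2 : Fin 3) : ℕ) = 2 := rfl
          have h2 : w.1 = 2 := by rw [Fin.ext_iff]; omega
          simp [h2]
        · have h1 : w.1 = 1 := hw1.symm
          have h2 : q - 1 < (w.2 : ℕ) := by
            rw [Fin.lt_def, fi_val h0 (by omega) (by omega)] at hw2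
            exact hw2
          simp [h1, (show ¬ ((w.2:ℕ)+1 = q) by omega), (show ¬ ((w.2:ℕ)+1 = p) by omega)]
  have hXmon : ∀ v : Fin 3 × Fin n, (X v : MvPolynomial (Fin 3 × Fin n) k)
      = monomial (Finsupp.single v 1) 1 := fun _ => rfl
  have hsummeq : ∀ m, i ≤ m → m ≤ j - 1 →
      (∏ t ∈ Finset.Icc (m + 2) j, xz k n h0 t) *
        (∏ t ∈ Finset.Icc (m + 1) (j - 1), zz k n h0 t) * gOne k n h0 m
      = monomial (F m) 1 - monomial (F (m+1)) 1 := by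
    intro m hm1 hm2
    have e1 : F m = (∑ t ∈ Finset.Icc (m+2) j, Finsupp.single (((0:Fin 3), fi n h0 t) : Fin 3 × Fin n) 1)
        + (∑ t ∈ Finset.Icc (m+1) (j-1), Finsupp.single (((2:Fin 3), fi n h0 t) : Fin 3 × Fin n) 1)
        + ((∑ t ∈ Finset.Icc 1 (m-1), Finsupp.single (((0:Fin 3), fi n h0 t) : Fin 3 × Fin n) 1)
          + (∑ t ∈ Finset.Icc 1 m, Finsupp.single (((2:Fin 3), fi n h0 t) : Fin 3 × Fin n) 1)
          + (Finsupp.single (((0:Fin 3), fi n h0 (m+1)) : Fin 3 × Fin n) 1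
             + Finsupp.single (((1:Fin 3), fi n h0 m) : Fin 3 × Fin n) 1)) := by
      simp only [hF]
      unfold expOf
      rw [split_eraseA (fun t => Finsupp.single (((0:Fin 3), fi n h0 t) : Fin 3 × Fin n) (1:ℕ))
            (show 1 ≤ m by omega) (show m < j by omega),
          split_z (fun t => Finsupp.single (((2:Fin 3), fi n h0 t) : Fin 3 × Fin n) (1:ℕ))
            (show m ≤ j - 1 by omega),
          Finset.sum_singleton]
      abel
    have e2 : F (m+1) = (∑ t ∈ Finset.Icc (m+2) j, Finsupp.single (((0:Fin 3), fi n h0 t) : Fin 3 × Fin n) 1)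
        + (∑ t ∈ Finset.Icc (m+1) (j-1), Finsupp.single (((2:Fin 3), fi n h0 t) : Fin 3 × Fin n) 1)
        + ((∑ t ∈ Finset.Icc 1 (m-1), Finsupp.single (((0:Fin 3), fi n h0 t) : Fin 3 × Fin n) 1)
          + (∑ t ∈ Finset.Icc 1 m, Finsupp.single (((2:Fin 3), fi n h0 t) : Fin 3 × Fin n) 1)
          + (Finsupp.single (((0:Fin 3), fi n h0 m) : Fin 3 × Fin n) 1
             + Finsupp.single (((1:Fin 3), fi n h0 (m+1)) : Fin 3 × Fin n) 1)) := by
      simp only [hF]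
      unfold expOf
      rw [split_eraseB (fun t => Finsupp.single (((0:Fin 3), fi n h0 t) : Fin 3 × Fin n) (1:ℕ))
            (show 1 ≤ m by omega) (show m + 1 ≤ j by omega),
          split_z (fun t => Finsupp.single (((2:Fin 3), fi n h0 t) : Fin 3 × Fin n) (1:ℕ))
            (show m ≤ j - 1 by omega),
          Finset.sum_singleton]
      abel
    simp only [gOne, Δz, xz, yz, zz]
    rw [prod_X_eq, prod_X_eq, prod_X_eq, prod_X_eq]
    simp only [hXmon, mul_sub, monomial_mul, one_mul, mul_one]
    rw [e1, e2]
  have hLHSeq : (∏ t ∈ (Finset.Icc 1 (j - 1)).erase i, xz k n h0 t) *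
      (∏ t ∈ Finset.Icc 1 (j - 1), zz k n h0 t) * Δz k n h0 j i
      = monomial (F i) 1 - monomial (F j) 1 := by
    have e1 : F i = (∑ t ∈ (Finset.Icc 1 (j-1)).erase i, Finsupp.single (((0:Fin 3), fi n h0 t) : Fin 3 × Fin n) 1)
        + (∑ t ∈ Finset.Icc 1 (j-1), Finsupp.single (((2:Fin 3), fi n h0 t) : Fin 3 × Fin n) 1)
        + (Finsupp.single (((0:Fin 3), fi n h0 j) : Fin 3 × Fin n) 1
           + Finsupp.single (((1:Fin 3), fi n h0 i) : Fin 3 × Fin n) 1) := by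
      simp only [hF]
      unfold expOf
      rw [split_top (fun t => Finsupp.single (((0:Fin 3), fi n h0 t) : Fin 3 × Fin n) (1:ℕ))
            (show 1 ≤ i by omega) (show i < j by omega), Finset.sum_singleton]
      abel
    have e2 : F j = (∑ t ∈ (Finset.Icc 1 (j-1)).erase i, Finsupp.single (((0:Fin 3), fi n h0 t) : Fin 3 × Fin n) 1)
        + (∑ t ∈ Finset.Icc 1 (j-1), Finsupp.single (((2:Fin 3), fi n h0 t) : Fin 3 × Fin n) 1)
        + (Finsupp.single (((0:Fin 3), fi n h0 i) : Fin 3 × Fin n) 1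
           + Finsupp.single (((1:Fin 3), fi n h0 j) : Fin 3 × Fin n) 1) := by
      simp only [hF]
      unfold expOf
      rw [erase_topset (show 1 ≤ j by omega),
          split_full (fun t => Finsupp.single (((0:Fin 3), fi n h0 t) : Fin 3 × Fin n) (1:ℕ))
            (show 1 ≤ i by omega) (show i ≤ j - 1 by omega), Finset.sum_singleton]
      abel
    simp only [Δz, xz, yz, zz]
    rw [prod_X_eq, prod_X_eq]
    simp only [hXmon, mul_sub, monomial_mul, one_mul, mul_one]
    rw [e1, e2]
  refine ⟨?_, ?_, ?_⟩
  · refine hLHSeq.trans ?_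
    have ht := telescope (fun m => (monomial (F m) (1:k))) i (j-1) (by omega)
    rw [show j - 1 + 1 = j from by omega] at ht
    rw [← ht]
    exact Finset.sum_congr rfl fun m hm => by
      have hm' := Finset.mem_Icc.mp hm
      exact (hsummeq m hm'.1 hm'.2).symm
  · have hr := hrlt i j hi hij le_rfl
    have : IsInit n ((∏ t ∈ (Finset.Icc 1 (j - 1)).erase i, xz k n h0 t) *
        (∏ t ∈ Finset.Icc 1 (j - 1), zz k n h0 t) * Δz k n h0 j i) (F i) := by
      rw [hLHSeq]
      exact isInit_binom (Ne.symm (rlt_ne hr)) hr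
    exact this
  · intro m hm e he
    have hm' := Finset.mem_Icc.mp hm
    have hr := hrlt m (m+1) (by omega) (by omega) (by omega)
    have hinit : IsInit n ((∏ t ∈ Finset.Icc (m + 2) j, xz k n h0 t) *
        (∏ t ∈ Finset.Icc (m + 1) (j - 1), zz k n h0 t) * gOne k n h0 m) (F m) := by
      rw [hsummeq m hm'.1 hm'.2]
      exact isInit_binom (Ne.symm (rlt_ne hr)) hr
    have heq : e = F m := isInit_unique he hinit
    rcases Nat.eq_or_lt_of_le hm'.1 with hcase | hcase
    · subst hcase
      left
      rw [heq]
    · right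
      rw [heq]
      exact hrlt i m hi hcase (by omega)
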